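/- Let G = (V,E) be a finite simple graph and A, B ⊆ V disjoint subsets with no edge between A and B. Then σ(G₋A)·σ(G₋B) − σ(G)·σ(G₋A₋B) = − Σ_{W ⊆ A, W independent} [ σ(G₋A₋N(W))·σ(G₋A₋B) − σ(G₋A)·σ(G₋A₋N(W)₋B) ], where N(W) = N_G(W). -/

import Mathlib

open scoped Classical

/-- The number of independent vertex sets of `G` avoiding the set `W`
(i.e. `σ(G₋W)`, the number of independent sets of `G` with `W` deleted). -/
noncomputable def sigmaDel {V : Type*} [Fintype V] (G : SimpleGraph V) (W : Set V) : ℕ :=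
  (Finset.univ.filter
    (fun s : Finset V => (∀ v ∈ s, v ∉ W) ∧ ∀ u ∈ s, ∀ v ∈ s, ¬ G.Adj u v)).card

/-- The number of independent vertex sets of `G`. -/
noncomputable def sigmaG {V : Type*} [Fintype V] (G : SimpleGraph V) : ℕ :=
  sigmaDel G ∅

lemma expand {V : Type*} [Fintype V] (G : SimpleGraph V) (A : Finset V) (C : Set V)
    (hC : ∀ a ∈ A, a ∉ C) :
    sigmaDel G C = ∑ W ∈ A.powerset.filter (fun W => ∀ u ∈ W, ∀ v ∈ W, ¬ G.Adj u v),
      sigmaDel G ((A : Set V) ∪ {x | ∃ w ∈ W, G.Adj w x} ∪ C) := by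
  unfold sigmaDel
  rw [Finset.card_eq_sum_card_fiberwise (f := fun s => s ∩ A)
    (t := A.powerset.filter (fun W => ∀ u ∈ W, ∀ v ∈ W, ¬ G.Adj u v))]
  · refine Finset.sum_congr rfl fun W hW => ?_
    simp only [Finset.mem_filter, Finset.mem_powerset] at hW
    obtain ⟨hWA, hWind⟩ := hW
    refine Finset.card_bij' (fun s _ => s \ A) (fun t _ => W ∪ t) ?_ ?_ ?_ ?_
    · intro s hs
      simp only [Finset.mem_filter, Finset.mem_univ, true_and] at hs ⊢
      obtain ⟨⟨hsC, hsind⟩, hsA⟩ := hs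
      refine ⟨fun v hv => ?_, fun u hu v hv => hsind u (Finset.mem_sdiff.mp hu).1 v (Finset.mem_sdiff.mp hv).1⟩
      rw [Finset.mem_sdiff] at hv
      simp only [Set.mem_union, Set.mem_setOf_eq, Finset.mem_coe, not_or]
      refine ⟨⟨fun h => hv.2 h, ?_⟩, hsC v hv.1⟩
      rintro ⟨w, hwW, hadj⟩
      have hws : w ∈ s := by rw [← hsA] at hwW; exact (Finset.mem_inter.mp hwW).1
      exact hsind w hws v hv.1 hadj
    · intro t ht
      simp only [Finset.mem_filter, Finset.mem_univ, true_and] at ht ⊢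
      obtain ⟨htAv, htind⟩ := ht
      have htA : ∀ v ∈ t, v ∉ A := fun v hv h => htAv v hv (Or.inl (Or.inl h))
      have htN : ∀ v ∈ t, ¬ ∃ w ∈ W, G.Adj w v := fun v hv h => htAv v hv (Or.inl (Or.inr h))
      refine ⟨⟨fun v hv => ?_, fun u hu v hv => ?_⟩, ?_⟩
      · rcases Finset.mem_union.mp hv with h | h
        · exact hC v (hWA h)
        · exact fun hc => htAv v h (Or.inr hc)
      · rcases Finset.mem_union.mp hu with hu' | hu' <;> rcases Finset.mem_union.mp hv with hv' | hv'
        · exact hWind u hu' v hv'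
        · exact fun h => htN v hv' ⟨u, hu', h⟩
        · exact fun h => htN u hu' ⟨v, hv', G.adj_symm h⟩
        · exact htind u hu' v hv'
      · ext x
        simp only [Finset.mem_inter, Finset.mem_union]
        constructor
        · rintro ⟨h | h, hA⟩
          · exact h
          · exact absurd hA (htA x h)
        · exact fun h => ⟨Or.inl h, hWA h⟩
    · intro s hs
      simp only [Finset.mem_filter] at hs
      have hsA := hs.2
      ext x
      simp only [Finset.mem_union, Finset.mem_sdiff]
      constructor
      · rintro (h | ⟨h, _⟩)
        · rw [← hsA] at h; exact (Finset.mem_inter.mp h).1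
        · exact h
      · intro hx
        by_cases hxA : x ∈ A
        · exact Or.inl (by rw [← hsA]; exact Finset.mem_inter.mpr ⟨hx, hxA⟩)
        · exact Or.inr ⟨hx, hxA⟩
    · intro t ht
      simp only [Finset.mem_filter, Finset.mem_univ, true_and] at ht
      have htA : ∀ v ∈ t, v ∉ A := fun v hv h => ht.1 v hv (Or.inl (Or.inl h))
      ext x
      simp only [Finset.mem_sdiff, Finset.mem_union]
      constructor
      · rintro ⟨h | h, hA⟩
        · exact absurd (hWA h) hA
        · exact h
      · exact fun hx => ⟨Or.inr hx, htA x hx⟩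
  · intro s hs
    simp only [Finset.mem_coe, Finset.mem_filter, Finset.mem_univ, true_and] at hs ⊢
    exact ⟨Finset.mem_powerset.mpr Finset.inter_subset_right,
      fun u hu v hv => hs.2 u (Finset.mem_inter.mp hu).1 v (Finset.mem_inter.mp hv).1⟩

theorem delta_sum_expansion {V : Type*} [Fintype V] (G : SimpleGraph V)
    (A B : Finset V) (hdisj : Disjoint A B)
    (hnoedge : ∀ a ∈ A, ∀ b ∈ B, ¬ G.Adj a b) :
    (sigmaDel G ↑A : ℤ) * sigmaDel G ↑B - (sigmaG G : ℤ) * sigmaDel G (↑A ∪ ↑B) =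
      - ∑ W ∈ A.powerset.filter (fun W => ∀ u ∈ W, ∀ v ∈ W, ¬ G.Adj u v),
          ((sigmaDel G ((A : Set V) ∪ {x | ∃ w ∈ W, G.Adj w x}) : ℤ) *
              sigmaDel G ((A : Set V) ∪ ↑B) -
            (sigmaDel G ↑A : ℤ) *
              sigmaDel G ((A : Set V) ∪ {x | ∃ w ∈ W, G.Adj w x} ∪ ↑B)) := by

  have h1 : (sigmaG G : ℤ) =
      ∑ W ∈ A.powerset.filter (fun W => ∀ u ∈ W, ∀ v ∈ W, ¬ G.Adj u v),
        (sigmaDel G ((A : Set V) ∪ {x | ∃ w ∈ W, G.Adj w x}) : ℤ) := by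
    have := expand G A ∅ (fun a _ h => h)
    rw [sigmaG, this]
    push_cast
    simp [Set.union_empty]
  have h2 : (sigmaDel G (↑B : Set V) : ℤ) =
      ∑ W ∈ A.powerset.filter (fun W => ∀ u ∈ W, ∀ v ∈ W, ¬ G.Adj u v),
        (sigmaDel G ((A : Set V) ∪ {x | ∃ w ∈ W, G.Adj w x} ∪ ↑B) : ℤ) := by
    have := expand G A ↑B (fun a ha hb => Finset.disjoint_left.mp hdisj ha hb)
    rw [this]
    push_cast
    rfl
  rw [h1, h2, Finset.mul_sum, Finset.sum_mul, ← Finset.sum_sub_distrib, ← Finset.sum_neg_distrib]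
  exact Finset.sum_congr rfl fun W _ => by ring
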